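/- In F_289 (the field with 289 elements, q = 17), for every a ∈ F_289* such that a⁶ = 4 or a⁶ = 5 (as elements of the prime field F_17 embedded in F_289), the map f(x) = a·x + x^49 is a permutation of F_289. -/

import Mathlib

structure F289 where
  x : ZMod 17
  y : ZMod 17
  deriving DecidableEq, Fintype

namespace F289

instance : Fact (Nat.Prime 17) := ⟨by norm_num⟩

@[ext] lemma ext' {a b : F289} (h1 : a.x = b.x) (h2 : a.y = b.y) : a = b := by
  cases a; cases b; simp_all

instance : Zero F289 := ⟨⟨0, 0⟩⟩
instance : One F289 := ⟨⟨1, 0⟩⟩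
instance : Add F289 := ⟨fun a b => ⟨a.x + b.x, a.y + b.y⟩⟩
instance : Mul F289 := ⟨fun a b => ⟨a.x * b.x + 3 * a.y * b.y, a.x * b.y + a.y * b.x⟩⟩
instance : Neg F289 := ⟨fun a => ⟨-a.x, -a.y⟩⟩

lemma zero_def : (0 : F289) = ⟨0, 0⟩ := rfl
lemma one_def : (1 : F289) = ⟨1, 0⟩ := rfl
lemma add_def (a b : F289) : a + b = ⟨a.x + b.x, a.y + b.y⟩ := rfl
lemma mul_def (a b : F289) : a * b = ⟨a.x * b.x + 3 * a.y * b.y, a.x * b.y + a.y * b.x⟩ := rfl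
lemma neg_def (a : F289) : -a = ⟨-a.x, -a.y⟩ := rfl

lemma add_assoc' (a b c : F289) : a + b + c = a + (b + c) := by
  ext <;> simp [add_def] <;> ring
lemma zero_add' (a : F289) : 0 + a = a := by ext <;> simp [add_def, zero_def]
lemma add_zero' (a : F289) : a + 0 = a := by ext <;> simp [add_def, zero_def]
lemma add_comm' (a b : F289) : a + b = b + a := by ext <;> simp [add_def] <;> ring
lemma mul_assoc' (a b c : F289) : a * b * c = a * (b * c) := by
  ext <;> simp [mul_def] <;> ring
lemma one_mul' (a : F289) : 1 * a = a := by ext <;> simp [mul_def, one_def]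
lemma mul_one' (a : F289) : a * 1 = a := by ext <;> simp [mul_def, one_def]
lemma left_distrib' (a b c : F289) : a * (b + c) = a * b + a * c := by
  ext <;> simp [mul_def, add_def] <;> ring
lemma right_distrib' (a b c : F289) : (a + b) * c = a * c + b * c := by
  ext <;> simp [mul_def, add_def] <;> ring
lemma mul_comm' (a b : F289) : a * b = b * a := by ext <;> simp [mul_def] <;> ring
lemma neg_add_cancel' (a : F289) : -a + a = 0 := by
  ext <;> simp [add_def, neg_def, zero_def]
lemma zero_mul' (a : F289) : 0 * a = 0 := by ext <;> simp [mul_def, zero_def]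
lemma mul_zero' (a : F289) : a * 0 = 0 := by ext <;> simp [mul_def, zero_def]

instance : CommRing F289 where
  add_assoc := add_assoc'
  zero_add := zero_add'
  add_zero := add_zero'
  add_comm := add_comm'
  mul_assoc := mul_assoc'
  one_mul := one_mul'
  mul_one := mul_one'
  left_distrib := left_distrib'
  right_distrib := right_distrib'
  mul_comm := mul_comm'
  neg_add_cancel := neg_add_cancel'
  zero_mul := zero_mul'
  mul_zero := mul_zero'
  nsmul := nsmulRec
  zsmul := zsmulRec

instance : Inv F289 := ⟨fun a => ⟨a.x * (a.x ^ 2 - 3 * a.y ^ 2)⁻¹, -a.y * (a.x ^ 2 - 3 * a.y ^ 2)⁻¹⟩⟩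

lemma inv_def (a : F289) :
    a⁻¹ = ⟨a.x * (a.x ^ 2 - 3 * a.y ^ 2)⁻¹, -a.y * (a.x ^ 2 - 3 * a.y ^ 2)⁻¹⟩ := rfl

lemma nonresidue : ∀ u v : ZMod 17, u ^ 2 - 3 * v ^ 2 = 0 → u = 0 ∧ v = 0 := by decide

lemma mul_inv_cancel' (a : F289) (h : a ≠ 0) : a * a⁻¹ = 1 := by
  have hd : a.x ^ 2 - 3 * a.y ^ 2 ≠ 0 := by
    intro h0
    obtain ⟨h1, h2⟩ := nonresidue a.x a.y h0
    exact h (by ext <;> simp [zero_def, h1, h2])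
  have hi := mul_inv_cancel₀ hd
  refine ext' ?_ ?_
  · simp [mul_def, inv_def, one_def]; linear_combination hi
  · simp [mul_def, inv_def, one_def]; ring

lemma inv_zero' : (0 : F289)⁻¹ = 0 := by ext <;> simp [inv_def, zero_def]

instance : Field F289 where
  exists_pair_ne := ⟨0, 1, by decide⟩
  mul_inv_cancel := mul_inv_cancel'
  inv_zero := inv_zero'
  nnqsmul := _
  qsmul := _

lemma card_F289 : Fintype.card F289 = 289 := by
  have e : F289 ≃ (ZMod 17 × ZMod 17) :=
    ⟨fun a => (a.x, a.y), fun p => ⟨p.1, p.2⟩, fun a => rfl, fun p => rfl⟩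
  rw [Fintype.card_congr e]
  simp


def g (t : F289) : F289 := (t * t * t * t * t * t * t) ^ 7

lemma g_eq (t : F289) : g t = t ^ 49 := by
  show (t * t * t * t * t * t * t) ^ 7 = t ^ 49
  rw [show t * t * t * t * t * t * t = t ^ 7 by ring, ← pow_mul]

set_option maxHeartbeats 4000000 in
set_option maxRecDepth 20000 in
lemma claim : ∀ t : F289,
    (g t - 1) ^ 6 = 4 * (t - 1) ^ 6 ∨ (g t - 1) ^ 6 = 5 * (t - 1) ^ 6 → t = 1 := by
  decide


lemma four_ne_one : (4 : F289) ≠ 1 := by decide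
lemma five_ne_one : (5 : F289) ≠ 1 := by decide

lemma claim' (t : F289) (h : (t ^ 49 - 1) ^ 6 = 4 * (t - 1) ^ 6 ∨ (t ^ 49 - 1) ^ 6 = 5 * (t - 1) ^ 6) :
    t = 1 := claim t (by rwa [g_eq])

lemma pow288 (x : F289) (hx : x ≠ 0) : x ^ 288 = 1 := by
  have := FiniteField.pow_card_sub_one_eq_one x hx
  rwa [card_F289] at this

lemma key (a : F289) (ha : a ≠ 0) (hroot : a ^ 6 = 4 ∨ a ^ 6 = 5) :
    Function.Bijective (fun x : F289 => a * x + x ^ 49) := by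
  rw [← Finite.injective_iff_bijective]
  intro x y h
  simp only at h
  -- rule out one of them being zero while the other is not
  have hzero : ∀ z : F289, z ≠ 0 → a * z + z ^ 49 = 0 → False := by
    intro z hz h0
    have h48 : a = -(z ^ 48) := by
      apply mul_right_cancel₀ hz
      linear_combination h0
    have : a ^ 6 = 1 := by
      rw [h48]
      have := pow288 z hz
      linear_combination this
    rcases hroot with hr | hr
    · exact four_ne_one (by rw [← hr, this])
    · exact five_ne_one (by rw [← hr, this])
  by_cases hx : x = 0
  · by_cases hy : y = 0
    · rw [hx, hy]
    · subst hx
      exact (hzero y hy (by linear_combination -h)).elim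
  · by_cases hy : y = 0
    · subst hy
      exact (hzero x hx (by linear_combination h)).elim
    · -- main case
      set t := y * x⁻¹ with htdef
      have hyx : y = t * x := by rw [htdef, mul_assoc, inv_mul_cancel₀ hx, mul_one]
      have hx288 := pow288 x hx
      have h1 : x ^ 49 * (1 - t ^ 49) = a * x * (t - 1) := by
        rw [hyx] at h
        linear_combination h
      have h2 : x ^ 48 * (1 - t ^ 49) = a * (t - 1) := by
        apply mul_left_cancel₀ hx
        linear_combination h1
      have E : (t ^ 49 - 1) ^ 6 = a ^ 6 * (t - 1) ^ 6 := by
        have h6 : (x ^ 48 * (1 - t ^ 49)) ^ 6 = (a * (t - 1)) ^ 6 := by rw [h2]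
        calc (t ^ 49 - 1) ^ 6 = x ^ 288 * (1 - t ^ 49) ^ 6 := by rw [hx288]; ring
          _ = (x ^ 48 * (1 - t ^ 49)) ^ 6 := by ring
          _ = (a * (t - 1)) ^ 6 := h6
          _ = a ^ 6 * (t - 1) ^ 6 := by ring
      have ht : t = 1 := by
        apply claim' t
        rcases hroot with hr | hr
        · left; rw [← hr]; exact E
        · right; rw [← hr]; exact E
      rw [hyx, ht, one_mul]

end F289

theorem perm_q_seventeen
    (F : Type*) [Field F] [Fintype F] (hF : Fintype.card F = 289)
    (a : F) (ha : a ≠ 0)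
    (hroot : a ^ 6 = 4 ∨ a ^ 6 = 5) :
    Function.Bijective (fun x : F => a * x + x ^ 49) := by
  have hcard : Fintype.card F = Fintype.card F289 := by rw [hF, F289.card_F289]
  have φ : F ≃+* F289 := FiniteField.ringEquivOfCardEq hcard
  have ha' : φ a ≠ 0 := fun h0 => ha (φ.injective (by rw [h0, map_zero]))
  have hroot' : (φ a) ^ 6 = 4 ∨ (φ a) ^ 6 = 5 := by
    rcases hroot with hr | hr
    · left; rw [← map_pow, hr, map_ofNat]
    · right; rw [← map_pow, hr, map_ofNat]
  have hb := F289.key (φ a) ha' hroot'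
  have hcomp : (fun x : F => a * x + x ^ 49)
      = φ.symm ∘ (fun z : F289 => φ a * z + z ^ 49) ∘ φ := by
    funext x
    simp only [Function.comp_apply]
    rw [← map_mul, ← map_pow, ← map_add, RingEquiv.symm_apply_apply]
  rw [hcomp]
  exact φ.symm.bijective.comp (hb.comp φ.bijective)
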